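/- arXiv:2601.09576 — 5 statements merged into one kernel-verified Lean document; each statement's English description precedes it below -/
import Mathlib

section
/- Let H be a real Hilbert space, let K be a closed subspace of H whose orthogonal complement N = K^⊥ is finite-dimensional, and define the square seminorm J : H → ℝ by J(η) = ‖P_K η‖², where P_K is the orthogonal projection of H onto K (so that N = {η ∈ H : J(η) = 0} is the null space of J). Let L : H → ℝ be continuous and strictly convex on H. If the restriction of L to N attains a minimum (i.e., there exists η₀ ∈ N with L(η₀) ≤ L(η) for all η ∈ N), then the functional η ↦ L(η) + J(η) has a unique minimizer over H: there exists a unique η* ∈ H such that L(η*) + J(η*) ≤ L(η) + J(η) for all η ∈ H. -/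
open Set

lemma exists_subgradient_of_min_on_subspace
    {E : Type*} [NormedAddCommGroup E] [NormedSpace ℝ E]
    (L : E → ℝ) (hLcont : Continuous L)
    (hconv : ConvexOn ℝ (Set.univ : Set E) L)
    (N : Submodule ℝ E) (η₀ : E) (hη₀ : η₀ ∈ N)
    (hmin : ∀ η ∈ N, L η₀ ≤ L η) :
    ∃ φ : E →L[ℝ] ℝ, (∀ n ∈ N, φ n = 0) ∧ ∀ η : E, L η₀ + φ (η - η₀) ≤ L η := by
  classical
  -- strict epigraph
  set A : Set (E × ℝ) := {p | L p.1 < p.2} with hA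
  have hAopen : IsOpen A := by
    have : Continuous fun p : E × ℝ => p.2 - L p.1 :=
      continuous_snd.sub (hLcont.comp continuous_fst)
    have : IsOpen {p : E × ℝ | 0 < p.2 - L p.1} := isOpen_lt continuous_const this
    simpa [A, sub_pos] using this
  have hAconv : Convex ℝ A := by
    rintro ⟨x, s⟩ hx ⟨y, t⟩ hy a b ha hb hab
    simp only [A, mem_setOf_eq] at hx hy ⊢
    have h1 : L (a • x + b • y) ≤ a * L x + b * L y :=
      hconv.2 (mem_univ x) (mem_univ y) ha hb hab
    have h2 : a * L x + b * L y < a * s + b * t := by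
      rcases eq_or_lt_of_le ha with ha0 | ha0
      · have hb1 : b = 1 := by linarith
        simpa [← ha0, hb1] using hy
      · rcases eq_or_lt_of_le hb with hb0 | hb0
        · have ha1 : a = 1 := by linarith
          simpa [← hb0, ha1] using hx
        · have := mul_lt_mul_of_pos_left hx ha0
          have := mul_lt_mul_of_pos_left hy hb0
          simpa [Prod.smul_mk, smul_eq_mul] using add_lt_add ‹a * L x < a * s› ‹b * L y < b * t›
    exact lt_of_le_of_lt h1 h2
  set B : Set (E × ℝ) := ((fun n => η₀ + n) '' (N : Set E)) ×ˢ Iic (L η₀) with hB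
  have hBconv : Convex ℝ B := (N.convex.translate η₀).prod (convex_Iic _)
  have hdisj : Disjoint A B := by
    rw [Set.disjoint_left]
    rintro ⟨x, t⟩ hxA ⟨⟨n, hn, rfl⟩, ht⟩
    have hxN : η₀ + n ∈ N := N.add_mem hη₀ hn
    have : L (η₀ + n) < t := hxA
    have := hmin _ hxN
    simp only [mem_Iic] at ht
    linarith
  obtain ⟨f, u, hfA, hfB⟩ := geometric_hahn_banach_open hAconv hAopen hBconv hdisj
  set α : ℝ := f (0, 1) with hα
  set ψ : E →L[ℝ] ℝ := f.comp (ContinuousLinearMap.inl ℝ E ℝ) with hψ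
  have hsplit : ∀ (η : E) (t : ℝ), f (η, t) = ψ η + t * α := by
    intro η t
    have : (η, t) = (η, (0:ℝ)) + t • ((0:E), (1:ℝ)) := by
      simp [Prod.ext_iff]
    rw [this, map_add, map_smul]
    simp [ψ, α, ContinuousLinearMap.inl, smul_eq_mul, mul_comm]
  have hBineq : ∀ n ∈ N, ∀ r ≤ L η₀, u ≤ ψ (η₀ + n) + r * α := by
    intro n hn r hr
    have : (η₀ + n, r) ∈ B := ⟨⟨n, hn, rfl⟩, hr⟩
    have := hfB _ this
    rwa [hsplit] at this
  have hAineq : ∀ (η : E) (t : ℝ), L η < t → ψ η + t * α < u := by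
    intro η t ht
    have := hfA (η, t) ht
    rwa [hsplit] at this
  have hα_nonpos : α ≤ 0 := by
    by_contra h
    push_neg at h
    have key : ∀ s : ℝ, 0 ≤ s → u ≤ ψ η₀ + (L η₀ - s) * α := by
      intro s hs
      simpa using hBineq 0 N.zero_mem (L η₀ - s) (by linarith)
    have := key ((ψ η₀ + L η₀ * α - u + 1) / α) (by
      have h1 := hBineq 0 N.zero_mem (L η₀) le_rfl
      simp only [add_zero] at h1
      have : 0 ≤ ψ η₀ + L η₀ * α - u + 1 := by linarith
      positivity)
    have hne : α ≠ 0 := ne_of_gt h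
    rw [sub_mul, div_mul_cancel₀ _ hne] at this
    linarith
  have hα_neg : α < 0 := by
    rcases lt_or_eq_of_le hα_nonpos with h | h
    · exact h
    · exfalso
      have h1 := hAineq η₀ (L η₀ + 1) (by linarith)
      have h2 := hBineq 0 N.zero_mem (L η₀) le_rfl
      simp only [add_zero] at h2
      simp only [h, mul_zero, add_zero] at h1 h2
      linarith
  have hψN : ∀ n ∈ N, ψ n = 0 := by
    intro n hn
    by_contra hne
    have key : ∀ c : ℝ, u ≤ ψ η₀ + c * ψ n + L η₀ * α := by
      intro c
      have h := hBineq (c • n) (N.smul_mem c hn) (L η₀) le_rfl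
      rw [map_add, map_smul, smul_eq_mul] at h
      linarith
    have := key ((u - ψ η₀ - L η₀ * α - 1) / ψ n)
    rw [div_mul_cancel₀ _ hne] at this
    linarith
  -- subgradient inequality for ψ
  have hsub : ∀ η : E, ψ η + L η * α ≤ ψ η₀ + L η₀ * α := by
    intro η
    have key : ∀ ε : ℝ, 0 < ε → ψ η + L η * α ≤ ψ η₀ + L η₀ * α + (-α) * ε := by
      intro ε hε
      have h1 := hAineq η (L η + ε) (by linarith)
      have h2 := hBineq 0 N.zero_mem (L η₀) le_rfl
      simp only [add_zero] at h2
      nlinarith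
    refine le_of_forall_pos_le_add ?_
    intro ε hε
    have hε' : 0 < ε / (-α) := div_pos hε (by linarith)
    have h := key _ hε'
    have hcanc : (-α) * (ε / (-α)) = ε :=
      mul_div_cancel₀ _ (by linarith)
    linarith
  refine ⟨(-α)⁻¹ • ψ, ?_, ?_⟩
  · intro n hn
    simp [hψN n hn]
  · intro η
    have h := hsub η
    have hna : (0:ℝ) < -α := by linarith
    have : ((-α)⁻¹ • ψ) (η - η₀) = (-α)⁻¹ * (ψ η - ψ η₀) := by
      simp [map_sub, mul_sub]
    rw [this]
    rw [← sub_nonneg]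
    have expand : L η - (L η₀ + (-α)⁻¹ * (ψ η - ψ η₀)) =
        (-α)⁻¹ * ((ψ η₀ + L η₀ * α) - (ψ η + L η * α)) := by
      have : α ≠ 0 := by linarith
      field_simp
      ring
    rw [expand]
    exact mul_nonneg (by positivity) (by linarith)
set_option maxHeartbeats 1000000 in
/-- **Existence and uniqueness of the penalized likelihood estimate**
(Gu & Qiu; Theorem 1 of the paper, with smoothing parameter λ = 1).

Let `H` be a real Hilbert space, `K` a closed subspace whose orthogonal
complement `Kᗮ` is finite dimensional, and let `J η = ‖P_K η‖²` be the
square seminorm given by the orthogonal projection `P_K` onto `K`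
(so that `Kᗮ` is the null space of `J`).  If `L : H → ℝ` is continuous and
strictly convex on `H` and `L` attains a minimum on the null space `Kᗮ`,
then `L + J` has a unique minimizer over `H`. -/
theorem smoothing_spline_exists_unique
    {H : Type*} [NormedAddCommGroup H] [InnerProductSpace ℝ H] [CompleteSpace H]
    (K : Submodule ℝ H) (hKclosed : IsClosed (K : Set H))
    [K.HasOrthogonalProjection]
    [FiniteDimensional ℝ Kᗮ]
    (L : H → ℝ) (hLcont : Continuous L)
    (hLconv : StrictConvexOn ℝ (Set.univ : Set H) L)
    (J : H → ℝ)
    (hJ : ∀ η : H, J η = ‖((K.orthogonalProjectionOnto η : K) : H)‖ ^ 2)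
    (hmin : ∃ η₀ ∈ Kᗮ, ∀ η ∈ Kᗮ, L η₀ ≤ L η) :
    ∃! ηstar : H, ∀ η : H, L ηstar + J ηstar ≤ L η + J η := by
  classical
  obtain ⟨η₀, hη₀N, hη₀min⟩ := hmin
  set pkL : H →L[ℝ] H := K.subtypeL.comp (K.orthogonalProjectionOnto) with hpkL
  set pnL : H →L[ℝ] H := Kᗮ.subtypeL.comp (Kᗮ.orthogonalProjectionOnto) with hpnL
  have hJ' : ∀ η, J η = ‖pkL η‖ ^ 2 := fun η => hJ η
  have hpn_coe : ∀ η : H, ((Kᗮ.orthogonalProjectionOnto η : Kᗮ) : H) = pnL η := fun _ => rfl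
  have hdecomp : ∀ η : H, pkL η + pnL η = η := fun η =>
    K.starProjection_add_starProjection_orthogonal η
  have hpn_mem : ∀ η, pnL η ∈ Kᗮ := fun η => (Kᗮ.orthogonalProjectionOnto η).2
  have hpk_zero : ∀ η ∈ Kᗮ, pkL η = 0 := by
    intro η hη
    have h := Submodule.orthogonalProjectionOnto_apply_of_mem_orthogonal hη
    simp only [hpkL, ContinuousLinearMap.comp_apply, h]
    simp
  have hpk_norm : ∀ η, ‖pkL η‖ ≤ ‖η‖ := by
    intro η
    have h1 : ‖pkL η‖ = ‖K.orthogonalProjectionOnto η‖ :=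
      Submodule.norm_coe (K.orthogonalProjectionOnto η)
    have h2 : ‖K.orthogonalProjectionOnto η‖ ≤ 1 * ‖η‖ :=
      (K.orthogonalProjectionOnto).le_of_opNorm_le (K.orthogonalProjectionOnto_norm_le) η
    rw [h1]; linarith [h2]
  have hpn_norm : ∀ η, ‖pnL η‖ ≤ ‖η‖ := by
    intro η
    have h1 : ‖pnL η‖ = ‖Kᗮ.orthogonalProjectionOnto η‖ :=
      Submodule.norm_coe (Kᗮ.orthogonalProjectionOnto η)
    have h2 : ‖Kᗮ.orthogonalProjectionOnto η‖ ≤ 1 * ‖η‖ :=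
      (Kᗮ.orthogonalProjectionOnto).le_of_opNorm_le (Kᗮ.orthogonalProjectionOnto_norm_le) η
    rw [h1]; linarith [h2]
  set F : H → ℝ := fun η => L η + J η with hF
  have hFdef : ∀ η, F η = L η + J η := fun _ => rfl
  have hJcont : Continuous J := by
    have h : J = fun η => ‖pkL η‖ ^ 2 := funext hJ'
    rw [h]
    exact (pkL.continuous.norm).pow 2
  have hFcont : Continuous F := hLcont.add hJcont
  clear_value pkL pnL F
  clear hpkL hpnL hF hJ
  have hpn_eq : ∀ η ∈ Kᗮ, pnL η = η := by
    intro η hη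
    have h := hdecomp η
    rw [hpk_zero η hη, zero_add] at h
    exact h
  -- subgradient
  obtain ⟨φ, hφN, hφsub⟩ := exists_subgradient_of_min_on_subspace L hLcont hLconv.convexOn
    Kᗮ η₀ hη₀N hη₀min
  have hφpk : ∀ η, φ (η - η₀) = φ (pkL η) := by
    intro η
    have h1 : η - η₀ = pkL η + (pnL η - η₀) := by
      calc η - η₀ = (pkL η + pnL η) - η₀ := by rw [hdecomp η]
      _ = pkL η + (pnL η - η₀) := by abel
    rw [h1, map_add, hφN _ (Kᗮ.sub_mem (hpn_mem η) hη₀N), add_zero]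
  have hFlow : ∀ η, L η₀ - ‖φ‖ * ‖pkL η‖ + ‖pkL η‖ ^ 2 ≤ F η := by
    intro η
    have h1 := hφsub η
    rw [hφpk η] at h1
    have h2 : ‖φ (pkL η)‖ ≤ ‖φ‖ * ‖pkL η‖ := φ.le_opNorm _
    rw [Real.norm_eq_abs] at h2
    have h3 := abs_le.mp h2
    have h4 : J η = ‖pkL η‖ ^ 2 := hJ' η
    rw [hFdef, h4]
    linarith [h3.1]
  have hbdd : ∀ η, L η₀ - ‖φ‖ ^ 2 / 4 ≤ F η := by
    intro η
    have h := hFlow η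
    have hsq : ‖pkL η‖ ^ 2 - ‖φ‖ * ‖pkL η‖ + ‖φ‖ ^ 2 / 4 = (‖pkL η‖ - ‖φ‖ / 2) ^ 2 := by
      ring
    have h2 : (0:ℝ) ≤ (‖pkL η‖ - ‖φ‖ / 2) ^ 2 := sq_nonneg _
    linarith [h, hsq, h2]
  have hrange_ne : (Set.range F).Nonempty := ⟨F η₀, η₀, rfl⟩
  have hrange_bdd : BddBelow (Set.range F) := by
    refine ⟨L η₀ - ‖φ‖ ^ 2 / 4, ?_⟩
    rintro _ ⟨η, rfl⟩
    exact hbdd η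
  set m := sInf (Set.range F) with hm
  have hm_le : ∀ η, m ≤ F η := fun η => csInf_le hrange_bdd ⟨η, rfl⟩
  have hmex : ∀ j : ℕ, ∃ η : H, F η < m + 1 / ((j : ℝ) + 1) := by
    intro j
    have hlt : m < m + 1 / ((j : ℝ) + 1) := by
      have h : (0:ℝ) < 1 / ((j : ℝ) + 1) := by positivity
      linarith
    obtain ⟨_, ⟨η, rfl⟩, hη⟩ := (csInf_lt_iff hrange_bdd hrange_ne).mp (hm ▸ hlt)
    exact ⟨η, hη⟩
  clear_value m
  clear hm
  have hJη₀ : J η₀ = 0 := by rw [hJ', hpk_zero η₀ hη₀N, norm_zero]; ring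
  have hmLη₀ : m ≤ L η₀ := by
    have h := hm_le η₀
    rw [hFdef, hJη₀] at h
    linarith
  choose e he using hmex
  obtain ⟨R, hR⟩ : ∃ R : ℝ, R = ‖φ‖ + 1 := ⟨_, rfl⟩
  have hpkR : ∀ η, F η ≤ m + 1 → ‖pkL η‖ ≤ R := by
    intro η hη
    have h1 := hFlow η
    have h2 : ‖pkL η‖ ^ 2 ≤ 1 + ‖φ‖ * ‖pkL η‖ := by linarith
    by_contra hcon
    push_neg at hcon
    have hx : (0:ℝ) < ‖pkL η‖ := by
      have h0 : (0:ℝ) ≤ ‖φ‖ := norm_nonneg φ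
      have hR1 : (1:ℝ) ≤ R := by rw [hR]; linarith
      linarith
    have hR1 : R = ‖φ‖ + 1 := hR
    nlinarith [mul_pos (sub_pos.mpr hcon) hx, norm_nonneg φ]
  -- midpoint / parallelogram facts
  have hJmid : ∀ x y : H, ‖pkL ((1/2 : ℝ) • x + (1/2 : ℝ) • y)‖ ^ 2
      = (1/2) * ‖pkL x‖ ^ 2 + (1/2) * ‖pkL y‖ ^ 2 - (1/4) * ‖pkL x - pkL y‖ ^ 2 := by
    intro x y
    have hmap : pkL ((1/2 : ℝ) • x + (1/2 : ℝ) • y) = (1/2 : ℝ) • (pkL x + pkL y) := by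
      rw [map_add, map_smul, map_smul, smul_add]
    rw [hmap, norm_smul, Real.norm_eq_abs, abs_of_pos (by norm_num : (0:ℝ) < 1/2)]
    have hpar := parallelogram_law_with_norm ℝ (pkL x) (pkL y)
    nlinarith [hpar]
  have hLmid : ∀ x y : H, L ((1/2 : ℝ) • x + (1/2 : ℝ) • y) ≤ (1/2) * L x + (1/2) * L y :=
    fun x y => hLconv.convexOn.2 (Set.mem_univ x) (Set.mem_univ y)
      (by norm_num) (by norm_num) (by norm_num)
  have hmidF : ∀ x y : H, m + (1/4) * ‖pkL x - pkL y‖ ^ 2 ≤ (1/2) * F x + (1/2) * F y := by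
    intro x y
    have h1 := hm_le ((1/2 : ℝ) • x + (1/2 : ℝ) • y)
    rw [hFdef, hJ'] at h1
    rw [hJmid x y] at h1
    have h2 := hLmid x y
    rw [hFdef x, hFdef y, hJ' x, hJ' y]
    linarith
  -- sublevel boundedness in the Kᗮ direction
  have hN : ∃ C : ℝ, ∀ η, F η ≤ m + 1 → ‖pnL η‖ ≤ C := by
    by_contra hcon
    push_neg at hcon
    have hsel : ∀ j : ℕ, ∃ η, F η ≤ m + 1 ∧ ((j : ℝ) + ‖η₀‖ + 1) < ‖pnL η‖ := fun j => hcon _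
    choose s hs1 hs2 using hsel
    obtain ⟨d, hd⟩ : ∃ d : ℕ → ℝ, ∀ j, d j = ‖s j - η₀‖ := ⟨_, fun _ => rfl⟩
    have hpnd : ∀ j : ℕ, ‖pnL (s j) - η₀‖ ≤ d j := by
      intro j
      have hx : pnL (s j) - η₀ = pnL (s j - η₀) := by
        rw [map_sub, hpn_eq η₀ hη₀N]
      rw [hx, hd]
      exact hpn_norm _
    have hdlb : ∀ j : ℕ, (j : ℝ) + 1 ≤ d j := by
      intro j
      have h3 : ‖pnL (s j)‖ - ‖η₀‖ ≤ ‖pnL (s j) - η₀‖ := norm_sub_norm_le _ _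
      linarith [hs2 j, hpnd j]
    have hdpos : ∀ j : ℕ, 0 < d j := fun j => lt_of_lt_of_le (by positivity) (hdlb j)
    obtain ⟨t, htj⟩ : ∃ t : ℕ → ℝ, ∀ j, t j = (d j)⁻¹ := ⟨_, fun _ => rfl⟩
    have htpos : ∀ j : ℕ, 0 < t j := fun j => by rw [htj]; exact inv_pos.mpr (hdpos j)
    have htd : ∀ j : ℕ, t j * d j = 1 := fun j => by
      rw [htj]; exact inv_mul_cancel₀ (ne_of_gt (hdpos j))
    have htle : ∀ j : ℕ, t j ≤ 1 / ((j : ℝ) + 1) := by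
      intro j
      rw [htj, one_div]
      exact inv_anti₀ (show (0:ℝ) < (j:ℝ) + 1 by positivity) (hdlb j)
    have ht1 : ∀ j : ℕ, t j ≤ 1 := by
      intro j
      refine le_trans (htle j) ?_
      rw [div_le_one (by positivity)]
      have h0 : (0:ℝ) ≤ (j:ℝ) := Nat.cast_nonneg j
      linarith
    obtain ⟨ζ, hζj⟩ : ∃ ζ : ℕ → H, ∀ j, ζ j = η₀ + t j • (s j - η₀) := ⟨_, fun _ => rfl⟩
    have hLs : ∀ j : ℕ, L (s j) ≤ m + 1 := by
      intro j
      have h0 : 0 ≤ J (s j) := by rw [hJ']; positivity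
      have h := hs1 j
      rw [hFdef] at h
      linarith
    have hLζ : ∀ j : ℕ, L (ζ j) ≤ L η₀ + t j * (m + 1 - L η₀) := by
      intro j
      have hcomb : ζ j = (1 - t j) • η₀ + t j • s j := by
        rw [hζj j]
        simp only [smul_sub, sub_smul, one_smul]
        abel
      have hc : L ((1 - t j) • η₀ + t j • s j) ≤ (1 - t j) * L η₀ + t j * L (s j) :=
        hLconv.convexOn.2 (Set.mem_univ η₀) (Set.mem_univ (s j))
          (by linarith [ht1 j]) (le_of_lt (htpos j)) (by ring)
      rw [← hcomb] at hc
      nlinarith [htpos j, hLs j, hc]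
    have hpkζeq : ∀ j : ℕ, pkL (ζ j) = t j • pkL (s j) := by
      intro j
      rw [hζj j]
      rw [map_add, map_smul, map_sub, hpk_zero η₀ hη₀N]
      simp
    have hpkζ : ∀ j : ℕ, ‖pkL (ζ j)‖ ≤ t j * R := by
      intro j
      rw [hpkζeq j, norm_smul, Real.norm_eq_abs, abs_of_pos (htpos j)]
      exact mul_le_mul_of_nonneg_left (hpkR _ (hs1 j)) (le_of_lt (htpos j))
    have hpnζeq : ∀ j : ℕ, pnL (ζ j) - η₀ = t j • (pnL (s j) - η₀) := by
      intro j
      rw [hζj j]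
      rw [map_add, map_smul, map_sub, hpn_eq η₀ hη₀N]
      rw [smul_sub]
      abel
    obtain ⟨η₀', hη₀'c⟩ : ∃ v : Kᗮ, (v : H) = η₀ := ⟨⟨η₀, hη₀N⟩, rfl⟩
    obtain ⟨w, hwj⟩ : ∃ w : ℕ → Kᗮ, ∀ j, ((w j : H)) = pnL (ζ j) :=
      ⟨fun j => Kᗮ.orthogonalProjectionOnto (ζ j), fun j => hpn_coe _⟩
    have hwsub : ∀ j : ℕ, ‖w j - η₀'‖ = ‖pnL (ζ j) - η₀‖ := by
      intro j
      rw [← Submodule.norm_coe (w j - η₀')]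
      congr 1
      push_cast
      rw [hwj, hη₀'c]
    have hwub : ∀ j : ℕ, ‖w j - η₀'‖ ≤ 1 := by
      intro j
      rw [hwsub j, hpnζeq j, norm_smul, Real.norm_eq_abs, abs_of_pos (htpos j)]
      calc t j * ‖pnL (s j) - η₀‖ ≤ t j * d j :=
            mul_le_mul_of_nonneg_left (hpnd j) (le_of_lt (htpos j))
      _ = 1 := htd j
    have hpn_lb : ∀ j : ℕ, d j - R ≤ ‖pnL (s j) - η₀‖ := by
      intro j
      have hx : s j - η₀ = pkL (s j) + (pnL (s j) - η₀) := by
        calc s j - η₀ = (pkL (s j) + pnL (s j)) - η₀ := by rw [hdecomp (s j)]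
        _ = pkL (s j) + (pnL (s j) - η₀) := by abel
      have h1 : d j ≤ ‖pkL (s j)‖ + ‖pnL (s j) - η₀‖ := by
        rw [hd]
        calc ‖s j - η₀‖ = ‖pkL (s j) + (pnL (s j) - η₀)‖ := by rw [← hx]
        _ ≤ ‖pkL (s j)‖ + ‖pnL (s j) - η₀‖ := norm_add_le _ _
      linarith [hpkR (s j) (hs1 j)]
    have hwlb : ∀ j : ℕ, 1 - t j * R ≤ ‖w j - η₀'‖ := by
      intro j
      rw [hwsub j, hpnζeq j, norm_smul, Real.norm_eq_abs, abs_of_pos (htpos j)]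
      have h1 : t j * (d j - R) ≤ t j * ‖pnL (s j) - η₀‖ :=
        mul_le_mul_of_nonneg_left (hpn_lb j) (le_of_lt (htpos j))
      have h2 := htd j
      nlinarith
    haveI : ProperSpace Kᗮ := FiniteDimensional.proper ℝ Kᗮ
    have hwmem : ∀ j, w j ∈ Metric.closedBall η₀' 1 := fun j => by
      rw [Metric.mem_closedBall, dist_eq_norm]
      exact hwub j
    obtain ⟨nstar, hnmem, ψs, hψmono, hψtend⟩ :=
      (isCompact_closedBall η₀' 1).tendsto_subseq hwmem
    have htlim : Filter.Tendsto (fun j => t (ψs j)) Filter.atTop (nhds 0) := by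
      have hub : ∀ j : ℕ, t (ψs j) ≤ 1 / ((j : ℝ) + 1) := by
        intro j
        refine le_trans (htle (ψs j)) ?_
        have hcast : ((j : ℝ) + 1) ≤ ((ψs j : ℝ) + 1) := by
          have h0 : (j : ℝ) ≤ (ψs j : ℝ) := by exact_mod_cast hψmono.le_apply
          linarith
        exact one_div_le_one_div_of_le (show (0:ℝ) < (j:ℝ) + 1 by positivity) hcast
      exact squeeze_zero (fun j => le_of_lt (htpos _)) hub
        tendsto_one_div_add_atTop_nhds_zero_nat
    have hζdec : ∀ j : ℕ, ζ j = pkL (ζ j) + (w j : H) := by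
      intro j
      rw [hwj]
      exact (hdecomp (ζ j)).symm
    have hpk0 : Filter.Tendsto (fun j => pkL (ζ (ψs j))) Filter.atTop (nhds 0) := by
      apply squeeze_zero_norm (fun j => hpkζ (ψs j))
      have h := htlim.mul_const R
      simpa using h
    have hwlim : Filter.Tendsto (fun j => ((w (ψs j) : H))) Filter.atTop (nhds (nstar : H)) :=
      (continuous_subtype_val.tendsto _).comp hψtend
    have hζlim : Filter.Tendsto (fun j => ζ (ψs j)) Filter.atTop (nhds (nstar : H)) := by
      have h := hpk0.add hwlim
      rw [zero_add] at h
      refine h.congr fun j => ?_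
      rw [← hζdec]
    have hLn : L (nstar : H) ≤ L η₀ := by
      have h1 : Filter.Tendsto (fun j => L (ζ (ψs j))) Filter.atTop (nhds (L (nstar : H))) :=
        (hLcont.tendsto _).comp hζlim
      have h2 : Filter.Tendsto (fun j => L η₀ + t (ψs j) * (m + 1 - L η₀))
          Filter.atTop (nhds (L η₀ + 0 * (m + 1 - L η₀))) :=
        tendsto_const_nhds.add (htlim.mul_const _)
      rw [zero_mul, add_zero] at h2
      exact le_of_tendsto_of_tendsto h1 h2
        (Filter.Eventually.of_forall fun j => hLζ (ψs j))
    have hnorm_ge : 1 ≤ ‖nstar - η₀'‖ := by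
      have h1 : Filter.Tendsto (fun j => ‖w (ψs j) - η₀'‖) Filter.atTop
          (nhds ‖nstar - η₀'‖) := (hψtend.sub tendsto_const_nhds).norm
      have h2 : Filter.Tendsto (fun j => 1 - t (ψs j) * R) Filter.atTop
          (nhds (1 - 0 * R)) := tendsto_const_nhds.sub (htlim.mul_const R)
      rw [zero_mul, sub_zero] at h2
      exact le_of_tendsto_of_tendsto h2 h1
        (Filter.Eventually.of_forall fun j => hwlb (ψs j))
    have hne : (nstar : H) ≠ η₀ := by
      intro h
      have hh : nstar = η₀' := by
        apply Subtype.ext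
        rw [hη₀'c, h]
      rw [hh, sub_self, norm_zero] at hnorm_ge
      linarith
    have hmid := hLconv.2 (Set.mem_univ (nstar : H)) (Set.mem_univ η₀) hne
      (by norm_num : (0:ℝ) < 1/2) (by norm_num : (0:ℝ) < 1/2) (by norm_num)
    simp only [smul_eq_mul] at hmid
    have hmidmem : (1/2 : ℝ) • (nstar : H) + (1/2 : ℝ) • η₀ ∈ Kᗮ :=
      Kᗮ.add_mem (Kᗮ.smul_mem _ nstar.2) (Kᗮ.smul_mem _ hη₀N)
    have hfin := hη₀min _ hmidmem
    linarith
  -- existence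
  have heF : ∀ j : ℕ, F (e j) ≤ m + 1 := by
    intro j
    have h1 : (1 : ℝ) / ((j : ℝ) + 1) ≤ 1 := by
      rw [div_le_one (by positivity)]
      have h0 : (0:ℝ) ≤ (j:ℝ) := Nat.cast_nonneg j
      linarith
    linarith [he j]
  obtain ⟨C, hC⟩ := hN
  have hcauchy : CauchySeq (fun j => pkL (e j)) := by
    rw [Metric.cauchySeq_iff']
    intro ε hε
    obtain ⟨Nn, hNn⟩ := exists_nat_gt (4 / ε ^ 2)
    refine ⟨Nn, fun n hn => ?_⟩
    rw [dist_eq_norm]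
    have hb := hmidF (e n) (e Nn)
    have h1 := he n
    have h2 := he Nn
    have h3 : 1 / ((n : ℝ) + 1) ≤ 1 / ((Nn : ℝ) + 1) := by
      have hcast : ((Nn : ℝ) + 1) ≤ ((n : ℝ) + 1) := by
        have h0 : (Nn : ℝ) ≤ (n : ℝ) := by exact_mod_cast hn
        linarith
      exact one_div_le_one_div_of_le (show (0:ℝ) < (Nn:ℝ) + 1 by positivity) hcast
    have h5 : 4 * (1 / ((Nn : ℝ) + 1)) < ε ^ 2 := by
      rw [mul_one_div, div_lt_iff₀ (show (0:ℝ) < (Nn:ℝ) + 1 by positivity)]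
      have hε2 : (0:ℝ) < ε ^ 2 := by positivity
      have h6 : 4 / ε ^ 2 * ε ^ 2 < (Nn : ℝ) * ε ^ 2 :=
        mul_lt_mul_of_pos_right hNn hε2
      rw [div_mul_cancel₀ _ (ne_of_gt hε2)] at h6
      nlinarith
    have hsq : ‖pkL (e n) - pkL (e Nn)‖ ^ 2 < ε ^ 2 := by
      have h4 : (0:ℝ) < 1 / ((Nn : ℝ) + 1) := by positivity
      linarith [hb, h1, h2, h3, h5, h4]
    exact lt_of_pow_lt_pow_left₀ 2 (le_of_lt hε) hsq
  obtain ⟨kstar, hk⟩ := cauchySeq_tendsto_of_complete hcauchy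
  obtain ⟨w2, hw2j⟩ : ∃ w2 : ℕ → Kᗮ, ∀ j, ((w2 j : H)) = pnL (e j) :=
    ⟨fun j => Kᗮ.orthogonalProjectionOnto (e j), fun j => hpn_coe _⟩
  haveI : ProperSpace Kᗮ := FiniteDimensional.proper ℝ Kᗮ
  have hw2mem : ∀ j, w2 j ∈ Metric.closedBall (0 : Kᗮ) C := by
    intro j
    rw [Metric.mem_closedBall, dist_zero_right, ← Submodule.norm_coe (w2 j), hw2j]
    exact hC _ (heF j)
  obtain ⟨wstar, _, ψs, hψmono, hψtend⟩ :=
    (isCompact_closedBall (0 : Kᗮ) C).tendsto_subseq hw2mem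
  obtain ⟨ηstar, hηstar⟩ : ∃ v : H, v = kstar + (wstar : H) := ⟨_, rfl⟩
  have helim : Filter.Tendsto (fun j => e (ψs j)) Filter.atTop (nhds ηstar) := by
    have h1 : Filter.Tendsto (fun j => pkL (e (ψs j))) Filter.atTop (nhds kstar) :=
      hk.comp hψmono.tendsto_atTop
    have h2 : Filter.Tendsto (fun j => ((w2 (ψs j) : H))) Filter.atTop (nhds (wstar : H)) :=
      (continuous_subtype_val.tendsto _).comp hψtend
    have h3 := h1.add h2
    rw [← hηstar] at h3
    refine h3.congr fun j => ?_
    rw [hw2j]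
    exact hdecomp (e (ψs j))
  have hFm : Filter.Tendsto (fun j => F (e j)) Filter.atTop (nhds m) := by
    have hub : Filter.Tendsto (fun j : ℕ => m + 1 / ((j : ℝ) + 1)) Filter.atTop (nhds (m + 0)) :=
      tendsto_const_nhds.add tendsto_one_div_add_atTop_nhds_zero_nat
    rw [add_zero] at hub
    exact tendsto_of_tendsto_of_tendsto_of_le_of_le tendsto_const_nhds hub
      (fun j => hm_le (e j)) (fun j => le_of_lt (he j))
  have hFlim2 : Filter.Tendsto (fun j => F (e (ψs j))) Filter.atTop (nhds m) :=
    hFm.comp hψmono.tendsto_atTop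
  have hFstar : F ηstar = m :=
    tendsto_nhds_unique ((hFcont.tendsto _).comp helim) hFlim2
  have hstar_min : ∀ η, F ηstar ≤ F η := fun η => hFstar ▸ hm_le η
  refine ⟨ηstar, fun η => ?_, ?_⟩
  · have h := hstar_min η
    rw [hFdef, hFdef] at h
    exact h
  · intro y hy
    by_contra hne
    have h1 : F y ≤ F ηstar := by
      rw [hFdef, hFdef]
      exact hy ηstar
    have h2 : F ηstar ≤ F y := hstar_min y
    have hmidL := hLconv.2 (Set.mem_univ y) (Set.mem_univ ηstar) hne
      (by norm_num : (0:ℝ) < 1/2) (by norm_num : (0:ℝ) < 1/2) (by norm_num)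
    simp only [smul_eq_mul] at hmidL
    have hmidJ := hJmid y ηstar
    have hymid := hy ((1/2 : ℝ) • y + (1/2 : ℝ) • ηstar)
    have hJy : J y = ‖pkL y‖ ^ 2 := hJ' y
    have hJs : J ηstar = ‖pkL ηstar‖ ^ 2 := hJ' ηstar
    have hJm : J ((1/2 : ℝ) • y + (1/2 : ℝ) • ηstar)
        = ‖pkL ((1/2 : ℝ) • y + (1/2 : ℝ) • ηstar)‖ ^ 2 := hJ' _
    rw [hJm, hmidJ] at hymid
    rw [hFdef, hFdef, hJy, hJs] at h1
    rw [hFdef, hFdef, hJy, hJs] at h2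
    rw [hJy] at hymid
    linarith [sq_nonneg (‖pkL y - pkL ηstar‖), hmidL, hymid, h1, h2]
end

section
/- Assume in addition that the observed values X_1,…,X_n are pairwise distinct. If the directed graph G is connected but not strongly connected, then an NPMLE does not exist: the conditional likelihood ℒ has no maximizer over the probability simplex Δ, i.e., for every p ∈ Δ there exists q ∈ Δ with ℒ(q) > ℒ(p). -/
open Finset

/-- Directed edge relation of the graph `G` attached to a doubly truncated
dataset: there is an edge from `i` to `j` iff `U i ≤ X j ≤ V i`. -/
def dtEdge {n : ℕ} (U V X : Fin n → ℝ) (i j : Fin n) : Prop :=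
  U i ≤ X j ∧ X j ≤ V i

/-- Conditional likelihood of a doubly truncated dataset at a point `p` of the
probability simplex: `ℒ(p) = ∏ i, p i / ∑_{j : U i ≤ X j ≤ V i} p j`
(in Lean, division by `0` yields `0`, matching the convention `0/0 = 0`). -/
noncomputable def dtLik {n : ℕ} (U V X : Fin n → ℝ) (p : Fin n → ℝ) : ℝ :=
  ∏ i, p i / ∑ j ∈ univ.filter (fun j => U i ≤ X j ∧ X j ≤ V i), p j

private lemma div_div_div_cancel_aux (x y c : ℝ) (hc : c ≠ 0) :
    (x / c) / (y / c) = x / y := by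
  rcases eq_or_ne y 0 with h | h
  · simp [h]
  · field_simp

/-- **Nonexistence of the NPMLE** (Xiao & Hudgens).
For a doubly truncated dataset `(U_i, V_i, X_i)`, `i = 1, …, n`, with pairwise
distinct observed values `X_i`, if the directed graph `G` is connected (in the
underlying undirected sense) but not strongly connected, then the conditional
likelihood has no maximizer over the probability simplex: every `p` in the
simplex is strictly beaten by some `q` in the simplex. -/
theorem npmle_not_exists_of_connected_not_stronglyConnected
    {n : ℕ} (U V X : Fin n → ℝ)
    (htrunc : ∀ i, U i ≤ X i ∧ X i ≤ V i)
    (hdistinct : Function.Injective X)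
    (hconn : ∀ i j : Fin n,
      Relation.ReflTransGen (fun a b => dtEdge U V X a b ∨ dtEdge U V X b a) i j)
    (hnotstrong : ¬ ∀ i j : Fin n, Relation.ReflTransGen (dtEdge U V X) i j) :
    ∀ p ∈ stdSimplex ℝ (Fin n), ∃ q ∈ stdSimplex ℝ (Fin n),
      dtLik U V X p < dtLik U V X q := by
  classical
  intro p hp
  obtain ⟨hp0, hp1⟩ := hp
  set R : Fin n → Finset (Fin n) :=
    fun i => univ.filter (fun j => U i ≤ X j ∧ X j ≤ V i) with hRdef
  have hLik : ∀ r : Fin n → ℝ, dtLik U V X r = ∏ i, r i / ∑ j ∈ R i, r j := by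
    intro r; rfl
  have hmemR : ∀ i, i ∈ R i := by
    intro i; simp [hRdef, (htrunc i).1, (htrunc i).2]
  have hn : 0 < n := by
    rcases Nat.eq_zero_or_pos n with h | h
    · subst h; simp at hp1
    · exact h
  by_cases hLp : 0 < dtLik U V X p
  swap
  · -- uniform distribution beats p
    refine ⟨fun _ => (n : ℝ)⁻¹, ⟨fun _ => by positivity, ?_⟩, ?_⟩
    · simp [Finset.sum_const, Finset.card_univ]
      field_simp
    · have hq : 0 < dtLik U V X (fun _ => (n : ℝ)⁻¹) := by
        rw [hLik]
        apply Finset.prod_pos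
        intro i _
        rw [Finset.sum_const, nsmul_eq_mul]
        have hcard : 0 < ((R i).card : ℝ) :=
          Nat.cast_pos.2 (Finset.card_pos.2 ⟨i, hmemR i⟩)
        have : (0:ℝ) < (n:ℝ)⁻¹ := by positivity
        positivity
      exact lt_of_le_of_lt (le_of_not_gt hLp) hq
  -- now dtLik p > 0, hence all p i > 0 and all risk sums > 0
  have hfac : ∀ i, 0 < p i / ∑ j ∈ R i, p j := by
    intro i
    have hne : (p i / ∑ j ∈ R i, p j) ≠ 0 := by
      rw [hLik] at hLp
      intro h0
      have := Finset.prod_eq_zero (f := fun i => p i / ∑ j ∈ R i, p j)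
        (Finset.mem_univ i) h0
      rw [this] at hLp; exact lt_irrefl _ hLp
    have hge : 0 ≤ p i / ∑ j ∈ R i, p j :=
      div_nonneg (hp0 i) (Finset.sum_nonneg fun j _ => hp0 j)
    exact lt_of_le_of_ne hge (Ne.symm hne)
  have hppos : ∀ i, 0 < p i := by
    intro i
    rcases lt_or_eq_of_le (hp0 i) with h | h
    · exact h
    · exfalso; have := hfac i; rw [← h, zero_div] at this; exact lt_irrefl _ this
  have hSp : ∀ i, 0 < ∑ j ∈ R i, p j := by
    intro i
    exact Finset.sum_pos' (fun j _ => hp0 j) ⟨i, hmemR i, hppos i⟩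
  -- the closed reachable set A
  push_neg at hnotstrong
  obtain ⟨i₁, j₁, hij⟩ := hnotstrong
  set A : Finset (Fin n) :=
    univ.filter (fun k => Relation.ReflTransGen (dtEdge U V X) i₁ k) with hAdef
  have hiA : i₁ ∈ A := by
    simp only [hAdef, Finset.mem_filter, Finset.mem_univ, true_and]
    exact Relation.ReflTransGen.refl
  have hjA : j₁ ∉ A := by simp [hAdef]; exact hij
  have hclosed : ∀ k ∈ A, ∀ m, dtEdge U V X k m → m ∈ A := by
    intro k hk m hkm
    simp only [hAdef, Finset.mem_filter, Finset.mem_univ, true_and] at hk ⊢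
    exact hk.tail hkm
  -- edge from outside A into A
  have key : ∀ x : Fin n,
      Relation.ReflTransGen (fun a b => dtEdge U V X a b ∨ dtEdge U V X b a) i₁ x →
      x ∉ A → ∃ b, b ∉ A ∧ ∃ a ∈ A, dtEdge U V X b a := by
    intro x hpath
    induction hpath with
    | refl => intro hx; exact absurd hiA hx
    | @tail c x hic hcx ih =>
      intro hx
      by_cases hc : c ∈ A
      · rcases hcx with h | h
        · exact absurd (hclosed c hc x h) hx
        · exact ⟨x, hx, c, hc, h⟩
      · exact ih hc
  obtain ⟨b, hbA, a, haA, hba⟩ := key j₁ (hconn i₁ j₁) hjA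
  have haRb : a ∈ R b := by simp [hRdef, hba.1, hba.2]
  -- tilting construction
  set s : ℝ := ∑ k ∈ A, p k with hsdef
  have hs0 : 0 < s := Finset.sum_pos (fun k _ => hppos k) ⟨i₁, hiA⟩
  have hs1 : s ≤ 1 := by
    rw [← hp1, hsdef]
    exact Finset.sum_le_sum_of_subset_of_nonneg (Finset.subset_univ A)
      (fun k _ _ => hp0 k)
  set c : ℝ := 2 - s with hcdef
  have hc : 0 < c := by linarith
  set q : Fin n → ℝ := fun k => if k ∈ A then p k / c else 2 * p k / c with hqdef
  have hqval : ∀ k, q k = if k ∈ A then p k / c else 2 * p k / c := fun k => rfl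
  have hq0 : ∀ k, 0 ≤ q k := by
    intro k; rw [hqval]; split
    · exact div_nonneg (hp0 k) hc.le
    · exact div_nonneg (by linarith [hp0 k]) hc.le
  have hsumsplit : ∀ (f : Fin n → ℝ) (T : Finset (Fin n)),
      ∑ k ∈ T, f k = ∑ k ∈ T.filter (· ∈ A), f k + ∑ k ∈ T.filter (· ∉ A), f k :=
    fun f T => (Finset.sum_filter_add_sum_filter_not T (· ∈ A) f).symm
  have hqsum_gen : ∀ T : Finset (Fin n),
      ∑ k ∈ T, q k = ((∑ k ∈ T.filter (· ∈ A), p k) + 2 * ∑ k ∈ T.filter (· ∉ A), p k) / c := by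
    intro T
    rw [hsumsplit q T]
    have h1 : ∑ k ∈ T.filter (· ∈ A), q k = (∑ k ∈ T.filter (· ∈ A), p k) / c := by
      rw [Finset.sum_div]
      apply Finset.sum_congr rfl
      intro k hk
      rw [hqval, if_pos (Finset.mem_filter.1 hk).2]
    have h2 : ∑ k ∈ T.filter (· ∉ A), q k = (2 * ∑ k ∈ T.filter (· ∉ A), p k) / c := by
      rw [Finset.mul_sum, Finset.sum_div]
      apply Finset.sum_congr rfl
      intro k hk
      rw [hqval, if_neg (Finset.mem_filter.1 hk).2, mul_div_assoc]
    rw [h1, h2]; ring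
  have hfiltA : (univ : Finset (Fin n)).filter (· ∈ A) = A := by
    ext k; simp
  have hpq_sum : ∀ T : Finset (Fin n),
      ∑ k ∈ T, p k = (∑ k ∈ T.filter (· ∈ A), p k) + ∑ k ∈ T.filter (· ∉ A), p k :=
    fun T => hsumsplit p T
  have hq1 : ∑ k, q k = 1 := by
    rw [hqsum_gen univ]
    have h := hpq_sum univ
    rw [hp1] at h
    rw [hfiltA] at h ⊢
    have : ∑ k ∈ univ.filter (· ∉ A), p k = 1 - s := by rw [hsdef]; linarith
    rw [this, ← hsdef]
    field_simp [hcdef]; ring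
  refine ⟨q, ⟨hq0, hq1⟩, ?_⟩
  rw [hLik, hLik]
  apply Finset.prod_lt_prod (fun i _ => hfac i)
  · -- ∀ i, factor p ≤ factor q
    intro i _
    by_cases hiAm : i ∈ A
    · -- equality case
      have hsub : (R i).filter (· ∈ A) = R i := by
        apply Finset.filter_true_of_mem
        intro k hk
        simp only [hRdef, Finset.mem_filter, Finset.mem_univ, true_and] at hk
        exact hclosed i hiAm k hk
      have hsub2 : (R i).filter (· ∉ A) = ∅ := by
        rw [Finset.filter_not, hsub, Finset.sdiff_self]
      have : ∑ k ∈ R i, q k = (∑ k ∈ R i, p k) / c := by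
        rw [hqsum_gen, hsub, hsub2]; simp
      rw [this, hqval, if_pos hiAm]
      rw [div_div_div_cancel_aux _ _ _ hc.ne']
    · -- strict-direction inequality (non-strict here)
      set a' : ℝ := ∑ k ∈ (R i).filter (· ∈ A), p k with ha'
      set b' : ℝ := ∑ k ∈ (R i).filter (· ∉ A), p k with hb'
      have ha'0 : 0 ≤ a' := Finset.sum_nonneg fun k _ => hp0 k
      have hb'0 : 0 < b' := Finset.sum_pos'
        (fun k _ => hp0 k)
        ⟨i, Finset.mem_filter.2 ⟨hmemR i, hiAm⟩, hppos i⟩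
      have hSpi : ∑ k ∈ R i, p k = a' + b' := hpq_sum (R i)
      have hSqi : ∑ k ∈ R i, q k = (a' + 2 * b') / c := hqsum_gen (R i)
      rw [hSpi, hSqi, hqval, if_neg hiAm]
      rw [div_div_div_cancel_aux _ _ _ hc.ne']
      rw [div_le_div_iff₀ (by linarith) (by linarith)]
      nlinarith [hppos i]
  · -- strict at b
    refine ⟨b, Finset.mem_univ b, ?_⟩
    set a' : ℝ := ∑ k ∈ (R b).filter (· ∈ A), p k with ha'
    set b' : ℝ := ∑ k ∈ (R b).filter (· ∉ A), p k with hb'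
    have ha'0 : 0 < a' := Finset.sum_pos'
      (fun k _ => hp0 k)
      ⟨a, Finset.mem_filter.2 ⟨haRb, haA⟩, hppos a⟩
    have hb'0 : 0 < b' := Finset.sum_pos'
      (fun k _ => hp0 k)
      ⟨b, Finset.mem_filter.2 ⟨hmemR b, hbA⟩, hppos b⟩
    have hSpi : ∑ k ∈ R b, p k = a' + b' := hpq_sum (R b)
    have hSqi : ∑ k ∈ R b, q k = (a' + 2 * b') / c := hqsum_gen (R b)
    rw [hSpi, hSqi, hqval, if_neg hbA]
    rw [div_div_div_cancel_aux _ _ _ hc.ne']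
    rw [div_lt_div_iff₀ (by linarith) (by linarith)]
    nlinarith [hppos b]
end

section
/- For the seven-observation doubly truncated dataset X = (0.75, 1.05, 1.25, 1.5, 2.25, 2.4, 2.5) with truncation intervals [U_i, V_i] given by [0.4, 2], [0.3, 1.4], [0.8, 1.8], [0, 2.3], [1.3, 2.6], [1.1, 3], [2.45, 3.4], the conditional likelihood ℒ has no maximizer over the probability simplex Δ: for every p ∈ Δ there exists q ∈ Δ with ℒ(q) > ℒ(p). -/
open Finset

/-- The observed values of the seven-observation dataset of Xiao & Hudgens. -/
noncomputable def X₀ : Fin 7 → ℝ := ![0.75, 1.05, 1.25, 1.5, 2.25, 2.4, 2.5]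

/-- The left truncation limits of the dataset of Xiao & Hudgens. -/
noncomputable def U₀ : Fin 7 → ℝ := ![0.4, 0.3, 0.8, 0, 1.3, 1.1, 2.45]

/-- The right truncation limits of the dataset of Xiao & Hudgens. -/
noncomputable def V₀ : Fin 7 → ℝ := ![2, 1.4, 1.8, 2.3, 2.6, 3, 3.4]

/-- Explicit form of the conditional likelihood for the Xiao–Hudgens dataset. -/
lemma lik_eq (p : Fin 7 → ℝ) : dtLik U₀ V₀ X₀ p =
    (p 0 / (p 0 + p 1 + p 2 + p 3)) *
    (p 1 / (p 0 + p 1 + p 2)) *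
    (p 2 / (p 1 + p 2 + p 3)) *
    (p 3 / (p 0 + p 1 + p 2 + p 3 + p 4)) *
    (p 4 / (p 3 + p 4 + p 5 + p 6)) *
    (p 5 / (p 2 + p 3 + p 4 + p 5 + p 6)) *
    (p 6 / p 6) := by
  simp only [dtLik, Fin.prod_univ_seven, Finset.sum_filter, Fin.sum_univ_seven,
    show X₀ 0 = 0.75 from rfl, show X₀ 1 = 1.05 from rfl, show X₀ 2 = 1.25 from rfl,
    show X₀ 3 = 1.5 from rfl, show X₀ 4 = 2.25 from rfl, show X₀ 5 = 2.4 from rfl,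
    show X₀ 6 = 2.5 from rfl,
    show U₀ 0 = 0.4 from rfl, show U₀ 1 = 0.3 from rfl, show U₀ 2 = 0.8 from rfl,
    show U₀ 3 = 0 from rfl, show U₀ 4 = 1.3 from rfl, show U₀ 5 = 1.1 from rfl,
    show U₀ 6 = 2.45 from rfl,
    show V₀ 0 = 2 from rfl, show V₀ 1 = 1.4 from rfl, show V₀ 2 = 1.8 from rfl,
    show V₀ 3 = 2.3 from rfl, show V₀ 4 = 2.6 from rfl, show V₀ 5 = 3 from rfl,
    show V₀ 6 = 3.4 from rfl]
  norm_num

set_option maxHeartbeats 1600000 in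
/-- For the seven-observation doubly truncated dataset of Xiao & Hudgens
(Table 1 of the paper), the NPMLE does not exist: the conditional likelihood
has no maximizer over the probability simplex, i.e. every `p` in the simplex
is strictly beaten by some `q` in the simplex. -/
theorem xiao_example_npmle_not_exists :
    ∀ p ∈ stdSimplex ℝ (Fin 7), ∃ q ∈ stdSimplex ℝ (Fin 7),
      dtLik U₀ V₀ X₀ p < dtLik U₀ V₀ X₀ q := by
  intro p hp
  obtain ⟨hnn, hsum⟩ := hp
  rw [Fin.sum_univ_seven] at hsum
  by_cases H : 0 < dtLik U₀ V₀ X₀ p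
  · have h0 : 0 < p 0 := by
      rcases (hnn 0).lt_or_eq with h | h
      · exact h
      · rw [lik_eq, ← h] at H; simp at H
    have h1 : 0 < p 1 := by
      rcases (hnn 1).lt_or_eq with h | h
      · exact h
      · rw [lik_eq, ← h] at H; simp at H
    have h2 : 0 < p 2 := by
      rcases (hnn 2).lt_or_eq with h | h
      · exact h
      · rw [lik_eq, ← h] at H; simp at H
    have h3 : 0 < p 3 := by
      rcases (hnn 3).lt_or_eq with h | h
      · exact h
      · rw [lik_eq, ← h] at H; simp at H
    have h4 : 0 < p 4 := by
      rcases (hnn 4).lt_or_eq with h | h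
      · exact h
      · rw [lik_eq, ← h] at H; simp at H
    have h5 : 0 < p 5 := by
      rcases (hnn 5).lt_or_eq with h | h
      · exact h
      · rw [lik_eq, ← h] at H; simp at H
    have h6 : 0 < p 6 := by
      rcases (hnn 6).lt_or_eq with h | h
      · exact h
      · rw [lik_eq, ← h] at H; simp at H
    have hs : p 6 < 1 := by linarith
    set c : ℝ := (1 - p 6 / 2) / (1 - p 6) with hc
    have hden : (0:ℝ) < 1 - p 6 := by linarith
    have hc1 : 1 < c := by rw [hc, lt_div_iff₀ hden]; linarith
    have hcpos : 0 < c := by linarith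
    refine ⟨![c * p 0, c * p 1, c * p 2, c * p 3, c * p 4, c * p 5, p 6 / 2], ⟨?_, ?_⟩, ?_⟩
    · intro i
      fin_cases i
      · show (0:ℝ) ≤ c * p 0; positivity
      · show (0:ℝ) ≤ c * p 1; positivity
      · show (0:ℝ) ≤ c * p 2; positivity
      · show (0:ℝ) ≤ c * p 3; positivity
      · show (0:ℝ) ≤ c * p 4; positivity
      · show (0:ℝ) ≤ c * p 5; positivity
      · show (0:ℝ) ≤ p 6 / 2; positivity
    · rw [Fin.sum_univ_seven]
      show c * p 0 + c * p 1 + c * p 2 + c * p 3 + c * p 4 + c * p 5 + p 6 / 2 = 1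
      have hcc : c * (1 - p 6) = 1 - p 6 / 2 := by
        rw [hc, div_mul_cancel₀]; exact hden.ne'
      linear_combination c * hsum + hcc
    · rw [lik_eq, lik_eq]
      have q0 : (![c * p 0, c * p 1, c * p 2, c * p 3, c * p 4, c * p 5, p 6 / 2] : Fin 7 → ℝ) 0 = c * p 0 := rfl
      have q1 : (![c * p 0, c * p 1, c * p 2, c * p 3, c * p 4, c * p 5, p 6 / 2] : Fin 7 → ℝ) 1 = c * p 1 := rfl
      have q2 : (![c * p 0, c * p 1, c * p 2, c * p 3, c * p 4, c * p 5, p 6 / 2] : Fin 7 → ℝ) 2 = c * p 2 := rfl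
      have q3 : (![c * p 0, c * p 1, c * p 2, c * p 3, c * p 4, c * p 5, p 6 / 2] : Fin 7 → ℝ) 3 = c * p 3 := rfl
      have q4 : (![c * p 0, c * p 1, c * p 2, c * p 3, c * p 4, c * p 5, p 6 / 2] : Fin 7 → ℝ) 4 = c * p 4 := rfl
      have q5 : (![c * p 0, c * p 1, c * p 2, c * p 3, c * p 4, c * p 5, p 6 / 2] : Fin 7 → ℝ) 5 = c * p 5 := rfl
      have q6 : (![c * p 0, c * p 1, c * p 2, c * p 3, c * p 4, c * p 5, p 6 / 2] : Fin 7 → ℝ) 6 = p 6 / 2 := rfl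
      rw [q0, q1, q2, q3, q4, q5, q6]
      rw [div_self h6.ne', div_self (by positivity : p 6 / 2 ≠ 0), mul_one, mul_one]
      have e0 : c * p 0 / (c * p 0 + c * p 1 + c * p 2 + c * p 3)
          = p 0 / (p 0 + p 1 + p 2 + p 3) := by
        rw [show c * p 0 + c * p 1 + c * p 2 + c * p 3 = c * (p 0 + p 1 + p 2 + p 3) by ring,
          mul_div_mul_left _ _ hcpos.ne']
      have e1 : c * p 1 / (c * p 0 + c * p 1 + c * p 2) = p 1 / (p 0 + p 1 + p 2) := by
        rw [show c * p 0 + c * p 1 + c * p 2 = c * (p 0 + p 1 + p 2) by ring,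
          mul_div_mul_left _ _ hcpos.ne']
      have e2 : c * p 2 / (c * p 1 + c * p 2 + c * p 3) = p 2 / (p 1 + p 2 + p 3) := by
        rw [show c * p 1 + c * p 2 + c * p 3 = c * (p 1 + p 2 + p 3) by ring,
          mul_div_mul_left _ _ hcpos.ne']
      have e3 : c * p 3 / (c * p 0 + c * p 1 + c * p 2 + c * p 3 + c * p 4)
          = p 3 / (p 0 + p 1 + p 2 + p 3 + p 4) := by
        rw [show c * p 0 + c * p 1 + c * p 2 + c * p 3 + c * p 4
            = c * (p 0 + p 1 + p 2 + p 3 + p 4) by ring,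
          mul_div_mul_left _ _ hcpos.ne']
      rw [e0, e1, e2, e3]
      have hd1 : (0:ℝ) < p 3 + p 4 + p 5 + p 6 := by linarith
      have hd1' : (0:ℝ) < c * p 3 + c * p 4 + c * p 5 + p 6 / 2 := by
        have := mul_pos hcpos h3; have := mul_pos hcpos h4; have := mul_pos hcpos h5
        linarith
      have hd2 : (0:ℝ) < p 2 + p 3 + p 4 + p 5 + p 6 := by linarith
      have hd2' : (0:ℝ) < c * p 2 + c * p 3 + c * p 4 + c * p 5 + p 6 / 2 := by
        have := mul_pos hcpos h2; have := mul_pos hcpos h3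
        have := mul_pos hcpos h4; have := mul_pos hcpos h5
        linarith
      have hT4 : p 4 / (p 3 + p 4 + p 5 + p 6)
          < c * p 4 / (c * p 3 + c * p 4 + c * p 5 + p 6 / 2) := by
        rw [div_lt_div_iff₀ hd1 hd1']
        have hk : 0 < p 4 * p 6 * (c - 1/2) :=
          mul_pos (mul_pos h4 h6) (by linarith)
        linarith [hk]
      have hT5 : p 5 / (p 2 + p 3 + p 4 + p 5 + p 6)
          < c * p 5 / (c * p 2 + c * p 3 + c * p 4 + c * p 5 + p 6 / 2) := by
        rw [div_lt_div_iff₀ hd2 hd2']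
        have hk : 0 < p 5 * p 6 * (c - 1/2) :=
          mul_pos (mul_pos h5 h6) (by linarith)
        linarith [hk]
      have hP : 0 < p 0 / (p 0 + p 1 + p 2 + p 3) * (p 1 / (p 0 + p 1 + p 2)) *
          (p 2 / (p 1 + p 2 + p 3)) * (p 3 / (p 0 + p 1 + p 2 + p 3 + p 4)) :=
        mul_pos (mul_pos (mul_pos (div_pos h0 (by linarith)) (div_pos h1 (by linarith)))
          (div_pos h2 (by linarith))) (div_pos h3 (by linarith))
      conv_lhs => rw [mul_assoc]
      conv_rhs => rw [mul_assoc]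
      exact mul_lt_mul_of_pos_left
        (mul_lt_mul'' hT4 hT5 (div_pos h4 hd1).le (div_pos h5 hd2).le) hP
  · push_neg at H
    refine ⟨fun _ => 1/7, ⟨fun i => by norm_num, by rw [Fin.sum_univ_seven]; norm_num⟩, ?_⟩
    calc dtLik U₀ V₀ X₀ p ≤ 0 := H
      _ < dtLik U₀ V₀ X₀ (fun _ => 1/7) := by rw [lik_eq]; norm_num
end

section
/- Fix points x_1, …, x_n ∈ [0,1] and define, for continuous η : [0,1] → ℝ, the (unpenalized) negative log-likelihood functional L(η) = −(1/n) ∑_{i=1}^n η(x_i) + log ∫_0^1 e^{η(x)} dx. Then L is strictly convex on the subspace H₀ = {η ∈ C([0,1], ℝ) : ∫_0^1 η(x) dx = 0}: for all η, ξ ∈ H₀ with η ≠ ξ and all t ∈ (0,1), L(tη + (1−t)ξ) < t L(η) + (1−t) L(ξ). -/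
open MeasureTheory Set

lemma geom_lt_arith {a b t : ℝ} (ha : 0 < a) (hb : 0 < b) (hab : a ≠ b)
    (ht0 : 0 < t) (ht1 : t < 1) : a ^ t * b ^ (1 - t) < t * a + (1 - t) * b := by
  have h : t • Real.log a + (1 - t) • Real.log b < Real.log (t • a + (1 - t) • b) :=
    strictConcaveOn_log_Ioi.2 (Set.mem_Ioi.2 ha) (Set.mem_Ioi.2 hb) hab ht0
      (by linarith) (by ring)
  have key : a ^ t * b ^ (1 - t) = Real.exp (t * Real.log a + (1 - t) * Real.log b) := by
    rw [Real.rpow_def_of_pos ha, Real.rpow_def_of_pos hb, ← Real.exp_add]; ring_nf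
  rw [key]
  calc Real.exp (t * Real.log a + (1 - t) * Real.log b)
      < Real.exp (Real.log (t * a + (1 - t) * b)) := by
        apply Real.exp_lt_exp.2; simpa [smul_eq_mul] using h
    _ = t * a + (1 - t) * b := Real.exp_log (by nlinarith [mul_pos ht0 ha, mul_pos (show (0:ℝ) < 1 - t by linarith) hb])

lemma setIntegral_lt_of_cont {f g : ℝ → ℝ}
    (hf : ContinuousOn f (Icc 0 1)) (hg : ContinuousOn g (Icc 0 1))
    (hle : ∀ u ∈ Icc (0:ℝ) 1, f u ≤ g u) {u₀ : ℝ} (hu₀ : u₀ ∈ Icc (0:ℝ) 1)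
    (hlt : f u₀ < g u₀) :
    ∫ u in Icc (0:ℝ) 1, f u < ∫ u in Icc (0:ℝ) 1, g u := by
  have hfi : IntegrableOn f (Icc 0 1) := hf.integrableOn_Icc
  have hgi : IntegrableOn g (Icc 0 1) := hg.integrableOn_Icc
  have hd : ContinuousOn (fun u => g u - f u) (Icc 0 1) := hg.sub hf
  have hpos : (0:ℝ) < (g u₀ - f u₀) := by linarith
  -- find ε ball where g - f > 0
  have hev : ∀ᶠ u in nhdsWithin u₀ (Icc 0 1), 0 < g u - f u :=
    (hd u₀ hu₀).eventually (eventually_gt_nhds hpos) |>.mono (fun u hu => hu)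
  obtain ⟨ε, hε, hball⟩ := Metric.mem_nhdsWithin_iff.1 hev
  have key : 0 < ∫ u in Icc (0:ℝ) 1, (g u - f u) := by
    rw [setIntegral_pos_iff_support_of_nonneg_ae]
    · -- measure of support ∩ Icc
      set a := max 0 (u₀ - ε)
      set b := min 1 (u₀ + ε)
      have hab : a < b := by
        have h0 := hu₀.1; have h1 := hu₀.2
        simp only [a, b, lt_min_iff, max_lt_iff]
        constructor <;> constructor <;> linarith
      have hsub : Ioo a b ⊆ Function.support (fun u => g u - f u) ∩ Icc 0 1 := by
        intro u hu
        have hu1 : u ∈ Icc (0:ℝ) 1 := ⟨le_of_lt (lt_of_le_of_lt (le_max_left _ _) hu.1),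
          le_of_lt (lt_of_lt_of_le hu.2 (min_le_left _ _))⟩
        have hdist : dist u u₀ < ε := by
          rw [Real.dist_eq, abs_lt]
          have := hu.1; have := hu.2
          have h1 : u₀ - ε ≤ a := le_max_right _ _
          have h2 : b ≤ u₀ + ε := min_le_right _ _
          constructor <;> nlinarith [hu.1, hu.2]
        exact ⟨ne_of_gt (hball ⟨hdist, hu1⟩), hu1⟩
      calc (0:ENNReal) < volume (Ioo a b) := by simp [Real.volume_Ioo, hab]
        _ ≤ _ := measure_mono hsub
    · filter_upwards [ae_restrict_mem measurableSet_Icc] with u hu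
      have := hle u hu; simp; linarith
    · exact hgi.sub hfi
  have := integral_sub hgi hfi
  linarith [key, this ▸ key]

/-- The (unpenalized) negative log-likelihood functional for density estimation
on `[0,1]` via the logistic density transform, given data points `x 1, …, x n`:
`L(η) = -(1/n) ∑ i, η (x i) + log ∫_0^1 e^{η}`. -/
noncomputable def negLogLik {n : ℕ} (x : Fin n → ℝ) (η : ℝ → ℝ) : ℝ :=
  -(1 / (n : ℝ)) * ∑ i, η (x i) +
    Real.log (∫ u in Set.Icc (0 : ℝ) 1, Real.exp (η u))

/-- **Strict convexity of the negative log-likelihood on the zero-mean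
subspace `H₀`.**  Fix data points `x 1, …, x n ∈ [0,1]`.  The functional
`L(η) = -(1/n) ∑ i, η (x i) + log ∫_0^1 e^{η}` is strictly convex on
`H₀ = {η continuous on [0,1] : ∫_0^1 η = 0}`: for continuous zero-mean `η, ξ`
which differ somewhere on `[0,1]` and `t ∈ (0,1)`,
`L(t η + (1-t) ξ) < t L(η) + (1-t) L(ξ)`. -/
theorem negLogLik_strictConvexOn_zeroMean
    {n : ℕ} (x : Fin n → ℝ) (hx : ∀ i, x i ∈ Set.Icc (0 : ℝ) 1)
    (η ξ : ℝ → ℝ)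
    (hη : ContinuousOn η (Set.Icc 0 1)) (hξ : ContinuousOn ξ (Set.Icc 0 1))
    (hη0 : ∫ u in Set.Icc (0 : ℝ) 1, η u = 0)
    (hξ0 : ∫ u in Set.Icc (0 : ℝ) 1, ξ u = 0)
    (hne : ∃ u ∈ Set.Icc (0 : ℝ) 1, η u ≠ ξ u)
    (t : ℝ) (ht : t ∈ Set.Ioo (0 : ℝ) 1) :
    negLogLik x (fun u => t * η u + (1 - t) * ξ u) <
      t * negLogLik x η + (1 - t) * negLogLik x ξ := by
  obtain ⟨ht0, ht1⟩ := ht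
  have h1t : (0:ℝ) < 1 - t := by linarith
  have hEη : ContinuousOn (fun u => Real.exp (η u)) (Icc 0 1) :=
    Real.continuous_exp.comp_continuousOn hη
  have hEξ : ContinuousOn (fun u => Real.exp (ξ u)) (Icc 0 1) :=
    Real.continuous_exp.comp_continuousOn hξ
  have hcomb : ContinuousOn (fun u => t * η u + (1 - t) * ξ u) (Icc 0 1) :=
    ((continuousOn_const.mul hη).add (continuousOn_const.mul hξ))
  have hEcomb : ContinuousOn (fun u => Real.exp (t * η u + (1 - t) * ξ u)) (Icc 0 1) :=
    Real.continuous_exp.comp_continuousOn hcomb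
  set A := ∫ u in Icc (0:ℝ) 1, Real.exp (η u) with hAdef
  set B := ∫ u in Icc (0:ℝ) 1, Real.exp (ξ u) with hBdef
  have hpos : ∀ (f : ℝ → ℝ), ContinuousOn (fun u => Real.exp (f u)) (Icc 0 1) →
      0 < ∫ u in Icc (0:ℝ) 1, Real.exp (f u) := by
    intro f hf
    apply (setIntegral_pos_iff_support_of_nonneg_ae ?_ hf.integrableOn_Icc).2
    · have hs : Function.support (fun u => Real.exp (f u)) = Set.univ := by
        ext u; simp [Real.exp_ne_zero]
      rw [hs]
      simp [Real.volume_Icc]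
    · filter_upwards with u using (Real.exp_pos _).le
  have hApos : 0 < A := hpos η hEη
  have hBpos : 0 < B := hpos ξ hEξ
  -- non-constancy of the normalized densities
  have hc : ∃ u₀ ∈ Icc (0:ℝ) 1, Real.exp (η u₀) / A ≠ Real.exp (ξ u₀) / B := by
    by_contra hcon
    push_neg at hcon
    have heq : ∀ u ∈ Icc (0:ℝ) 1, η u - ξ u = Real.log A - Real.log B := by
      intro u hu
      have h := hcon u hu
      have h2 : Real.exp (η u) * B = Real.exp (ξ u) * A := by
        field_simp at h; linarith
      have h3 := congrArg Real.log h2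
      rw [Real.log_mul (Real.exp_ne_zero _) (ne_of_gt hBpos),
        Real.log_mul (Real.exp_ne_zero _) (ne_of_gt hApos),
        Real.log_exp, Real.log_exp] at h3
      linarith
    have hint : ∫ u in Icc (0:ℝ) 1, (η u - ξ u) = Real.log A - Real.log B := by
      rw [setIntegral_congr_fun measurableSet_Icc heq]
      simp [Real.volume_Icc]
    rw [integral_sub hη.integrableOn_Icc hξ.integrableOn_Icc, hη0, hξ0] at hint
    have hAB : Real.log A = Real.log B := by linarith
    obtain ⟨u, hu, hneu⟩ := hne
    have := heq u hu
    rw [hAB] at this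
    exact hneu (by linarith)
  obtain ⟨u₀, hu₀, hab⟩ := hc
  -- pointwise comparison function
  set Φ : ℝ → ℝ := fun u =>
    A ^ t * B ^ (1 - t) * (t * (Real.exp (η u) / A) + (1 - t) * (Real.exp (ξ u) / B))
    with hΦdef
  have hkey : ∀ u, Real.exp (t * η u + (1 - t) * ξ u) =
      A ^ t * B ^ (1 - t) * ((Real.exp (η u) / A) ^ t * (Real.exp (ξ u) / B) ^ (1 - t)) := by
    intro u
    have e1 : Real.exp (η u) = A * (Real.exp (η u) / A) := by field_simp
    have e2 : Real.exp (ξ u) = B * (Real.exp (ξ u) / B) := by field_simp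
    rw [Real.exp_add, mul_comm t (η u), mul_comm (1 - t) (ξ u), Real.exp_mul, Real.exp_mul]
    rw [show Real.exp (η u) ^ t = (A * (Real.exp (η u) / A)) ^ t from by rw [← e1],
      show Real.exp (ξ u) ^ (1 - t) = (B * (Real.exp (ξ u) / B)) ^ (1 - t) from by rw [← e2]]
    rw [Real.mul_rpow hApos.le (by positivity), Real.mul_rpow hBpos.le (by positivity)]
    ring
  have hle : ∀ u ∈ Icc (0:ℝ) 1, Real.exp (t * η u + (1 - t) * ξ u) ≤ Φ u := by
    intro u hu
    rw [hkey u, hΦdef]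
    have := Real.geom_mean_le_arith_mean2_weighted ht0.le h1t.le
      (by positivity : (0:ℝ) ≤ Real.exp (η u) / A) (by positivity : (0:ℝ) ≤ Real.exp (ξ u) / B)
      (by ring)
    have hcpos : (0:ℝ) < A ^ t * B ^ (1 - t) := by positivity
    exact mul_le_mul_of_nonneg_left this hcpos.le
  have hltpt : Real.exp (t * η u₀ + (1 - t) * ξ u₀) < Φ u₀ := by
    rw [hkey u₀, hΦdef]
    have := geom_lt_arith (by positivity : (0:ℝ) < Real.exp (η u₀) / A)
      (by positivity : (0:ℝ) < Real.exp (ξ u₀) / B) hab ht0 ht1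
    have hcpos : (0:ℝ) < A ^ t * B ^ (1 - t) := by positivity
    exact mul_lt_mul_of_pos_left this hcpos
  have hΦcont : ContinuousOn Φ (Icc 0 1) := by
    apply ContinuousOn.mul continuousOn_const
    exact (continuousOn_const.mul (hEη.div_const A)).add
      (continuousOn_const.mul (hEξ.div_const B))
  have hIΦ : ∫ u in Icc (0:ℝ) 1, Φ u = A ^ t * B ^ (1 - t) := by
    have hrw : Φ = fun u => (A ^ t * B ^ (1 - t) * t / A) * Real.exp (η u)
        + (A ^ t * B ^ (1 - t) * (1 - t) / B) * Real.exp (ξ u) := by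
      funext u; rw [hΦdef]; ring
    rw [hrw, integral_add ((hEη.integrableOn_Icc).const_mul _)
      ((hEξ.integrableOn_Icc).const_mul _), integral_const_mul, integral_const_mul,
      ← hAdef, ← hBdef]
    field_simp
    ring
  have hintlt : ∫ u in Icc (0:ℝ) 1, Real.exp (t * η u + (1 - t) * ξ u) < A ^ t * B ^ (1 - t) := by
    rw [← hIΦ]
    exact setIntegral_lt_of_cont hEcomb hΦcont hle hu₀ hltpt
  have hCpos : 0 < ∫ u in Icc (0:ℝ) 1, Real.exp (t * η u + (1 - t) * ξ u) :=
    hpos _ hEcomb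
  have hlog : Real.log (∫ u in Icc (0:ℝ) 1, Real.exp (t * η u + (1 - t) * ξ u)) <
      t * Real.log A + (1 - t) * Real.log B := by
    calc Real.log (∫ u in Icc (0:ℝ) 1, Real.exp (t * η u + (1 - t) * ξ u))
        < Real.log (A ^ t * B ^ (1 - t)) := Real.log_lt_log hCpos hintlt
      _ = t * Real.log A + (1 - t) * Real.log B := by
          rw [Real.log_mul (by positivity) (by positivity), Real.log_rpow hApos,
            Real.log_rpow hBpos]
  -- linear part
  have hsum : ∑ i, (t * η (x i) + (1 - t) * ξ (x i)) =
      t * ∑ i, η (x i) + (1 - t) * ∑ i, ξ (x i) := by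
    rw [Finset.sum_add_distrib, ← Finset.mul_sum, ← Finset.mul_sum]
  simp only [negLogLik, hsum, ← hAdef, ← hBdef]
  ring_nf
  ring_nf at hlog
  nlinarith [hlog]
end

section
/- Let (Ω, 𝒜, ℙ) be a probability space and let X and V be independent real-valued random variables, where V is uniformly distributed on the interval [a, b] with a < b. Let 0 < τ ≤ b − a and define U = V − τ. Assume ℙ(a ≤ X ≤ b − τ) = 1. Then the selection event has probability ℙ(U ≤ X ≤ V) = τ/(b − a) > 0, and for every Borel set A ⊆ ℝ the conditional distribution of X given the selection event equals the unconditional distribution: ℙ(X ∈ A | U ≤ X ≤ V) = ℙ(X ∈ A). Hence under interval sampling with a uniformly distributed right-truncation limit there is no sampling bias. -/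
open MeasureTheory ProbabilityTheory
open scoped ENNReal

/-- **No sampling bias under interval sampling with a uniform right-truncation
limit.**  Let `X` and `V` be independent real random variables on a probability
space, with `V` uniformly distributed on `[a, b]` (`a < b`).  Let
`0 < τ ≤ b - a`, set `U = V - τ`, and assume `ℙ(a ≤ X ≤ b - τ) = 1`.
Then the selection event `{U ≤ X ≤ V}` has probability `τ / (b - a) > 0`, and
for every Borel set `A ⊆ ℝ` the conditional distribution of `X` given the
selection event coincides with the unconditional one:
`ℙ(X ∈ A | U ≤ X ≤ V) = ℙ(X ∈ A)`. -/
theorem intervalSampling_uniform_no_bias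
    {Ω : Type*} [MeasurableSpace Ω] (μ : Measure Ω) [IsProbabilityMeasure μ]
    (X V : Ω → ℝ) (hXm : Measurable X) (hVm : Measurable V)
    (hindep : IndepFun X V μ)
    (a b : ℝ) (hab : a < b)
    (hV : Measure.map V μ =
      (ENNReal.ofReal (b - a))⁻¹ • volume.restrict (Set.Icc a b))
    (τ : ℝ) (hτ0 : 0 < τ) (hτ : τ ≤ b - a)
    (U : Ω → ℝ) (hU : ∀ ω, U ω = V ω - τ)
    (hsupp : μ {ω | a ≤ X ω ∧ X ω ≤ b - τ} = 1) :
    μ {ω | U ω ≤ X ω ∧ X ω ≤ V ω} = ENNReal.ofReal (τ / (b - a)) ∧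
      ∀ A : Set ℝ, MeasurableSet A →
        μ[X ⁻¹' A | {ω | U ω ≤ X ω ∧ X ω ≤ V ω}] = μ (X ⁻¹' A) := by
  classical
  set c : ℝ≥0∞ := ENNReal.ofReal (τ / (b - a)) with hc
  set E : Set Ω := {ω | U ω ≤ X ω ∧ X ω ≤ V ω} with hE
  have hEm : MeasurableSet E := by
    have : E = {ω | V ω - τ ≤ X ω ∧ X ω ≤ V ω} := by
      ext ω; simp [hE, hU ω]
    rw [this]
    exact (measurableSet_le (hVm.sub measurable_const) hXm).inter
      (measurableSet_le hXm hVm)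
  have hν : Measure.map X μ (Set.Icc a (b - τ)) = 1 := by
    rw [Measure.map_apply hXm measurableSet_Icc]
    have hpre : X ⁻¹' Set.Icc a (b - τ) = {ω | a ≤ X ω ∧ X ω ≤ b - τ} := by
      ext ω; simp [Set.mem_Icc]
    rw [hpre, hsupp]
  have hνprob : IsProbabilityMeasure (Measure.map X μ) :=
    Measure.isProbabilityMeasure_map hXm.aemeasurable
  have hpair : Measure.map (fun ω => (X ω, V ω)) μ =
      (Measure.map X μ).prod (Measure.map V μ) :=
    (indepFun_iff_map_prod_eq_prod_map_map hXm.aemeasurable hVm.aemeasurable).mp hindep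
  have hκIcc : ∀ x : ℝ, a ≤ x → x ≤ b - τ →
      Measure.map V μ (Set.Icc x (x + τ)) = c := by
    intro x hax hxb
    rw [hV]
    simp only [Measure.smul_apply, smul_eq_mul, Measure.restrict_apply measurableSet_Icc]
    have hsub : Set.Icc x (x + τ) ∩ Set.Icc a b = Set.Icc x (x + τ) := by
      rw [Set.inter_eq_left]
      exact Set.Icc_subset_Icc hax (by linarith)
    rw [hsub, Real.volume_Icc, hc, ENNReal.ofReal_div_of_pos (by linarith),
      div_eq_mul_inv, mul_comm]
    congr 1
    ring_nf
  have hae : ∀ᵐ x ∂(Measure.map X μ), x ∈ Set.Icc a (b - τ) := by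
    rw [ae_iff]
    have : {x : ℝ | ¬ x ∈ Set.Icc a (b - τ)} = (Set.Icc a (b - τ))ᶜ := rfl
    rw [this, measure_compl measurableSet_Icc (by simp [hν]), hν, measure_univ]
    simp
  have key : ∀ A : Set ℝ, MeasurableSet A →
      μ (E ∩ X ⁻¹' A) = c * μ (X ⁻¹' A) := by
    intro A hA
    have hEA : E ∩ X ⁻¹' A =
        (fun ω => (X ω, V ω)) ⁻¹' {p : ℝ × ℝ | (p.2 - τ ≤ p.1 ∧ p.1 ≤ p.2) ∧ p.1 ∈ A} := by
      ext ω
      simp only [hE, Set.mem_inter_iff, Set.mem_setOf_eq, Set.mem_preimage, hU ω]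
    have hSm : MeasurableSet {p : ℝ × ℝ | (p.2 - τ ≤ p.1 ∧ p.1 ≤ p.2) ∧ p.1 ∈ A} :=
      ((measurableSet_le (measurable_snd.sub measurable_const) measurable_fst).inter
        (measurableSet_le measurable_fst measurable_snd)).inter (measurable_fst hA)
    rw [hEA, ← Measure.map_apply (hXm.prodMk hVm) hSm, hpair,
      Measure.prod_apply hSm]
    have hsec : ∀ x : ℝ,
        (Prod.mk x ⁻¹' {p : ℝ × ℝ | (p.2 - τ ≤ p.1 ∧ p.1 ≤ p.2) ∧ p.1 ∈ A}) =
        if x ∈ A then Set.Icc x (x + τ) else ∅ := by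
      intro x
      ext v
      by_cases hx : x ∈ A
      · simp only [hx, if_true, Set.mem_preimage, Set.mem_setOf_eq, and_true, Set.mem_Icc]
        constructor
        · rintro ⟨h1, h2⟩; exact ⟨h2, by linarith⟩
        · rintro ⟨h1, h2⟩; exact ⟨by linarith, h1⟩
      · simp [hx]
    have hcongr : ∀ᵐ x ∂(Measure.map X μ),
        Measure.map V μ (Prod.mk x ⁻¹' {p : ℝ × ℝ | (p.2 - τ ≤ p.1 ∧ p.1 ≤ p.2) ∧ p.1 ∈ A})
        = A.indicator (fun _ => c) x := by
      filter_upwards [hae] with x hx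
      rw [hsec x]
      by_cases hxA : x ∈ A
      · simp only [hxA, if_true, Set.indicator_of_mem hxA]
        exact hκIcc x hx.1 hx.2
      · simp [hxA]
    rw [lintegral_congr_ae hcongr, lintegral_indicator hA, setLIntegral_const,
      Measure.map_apply hXm hA, mul_comm]
  have hc_pos : c ≠ 0 := by
    simp only [hc, ne_eq, ENNReal.ofReal_eq_zero, not_le]
    exact div_pos hτ0 (by linarith)
  have hc_fin : c ≠ ⊤ := ENNReal.ofReal_ne_top
  have hEfull : μ E = c := by
    have := key Set.univ MeasurableSet.univ
    simpa using this
  refine ⟨hEfull, fun A hA => ?_⟩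
  rw [cond_apply hEm, hEfull, key A hA, ← mul_assoc, ENNReal.inv_mul_cancel hc_pos hc_fin,
    one_mul]
end
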